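/- arXiv:1501.01802 — 2 statements merged into one kernel-verified Lean document; each statement's English description precedes it below -/
import Mathlib

section
/- Let γ ∈ (-2, 0). Define for nonzero X ∈ ℝ³: b(X) = -2|X|^γ X and σ(X) = |X|^{γ/2−1}(|X|² I − X⊗X). Then for all nonzero X, Y ∈ ℝ³: (X − Y)·(b(X) − b(Y)) + ‖σ(X) − σ(Y)‖² ≤ 2 |X − Y|² (min(|X|,|Y|))^{1+γ} / max(|X|,|Y|), where ‖·‖ is the Frobenius norm. -/
open Matrix

noncomputable section

/-- Frobenius norm of a 3×3 real matrix. -/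
def frob (M : Matrix (Fin 3) (Fin 3) ℝ) : ℝ := Real.sqrt (Matrix.trace (M * Mᵀ))

/-- The Landau drift kernel `b(X) = -2 |X|^γ X`. -/
def bKer (γ : ℝ) (X : EuclideanSpace ℝ (Fin 3)) : EuclideanSpace ℝ (Fin 3) :=
  (-2 * ‖X‖ ^ γ) • X

/-- The matrix `σ(X) = |X|^{γ/2 - 1} (|X|² I − X ⊗ X)`. -/
def sigmaMat (γ : ℝ) (X : EuclideanSpace ℝ (Fin 3)) : Matrix (Fin 3) (Fin 3) ℝ :=
  ‖X‖ ^ (γ / 2 - 1) •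
    (‖X‖ ^ 2 • (1 : Matrix (Fin 3) (Fin 3) ℝ) - Matrix.of fun i j => X i * X j)

lemma statement7_alg (a b c u v : ℝ) (ha : 0 < a) (hb : 0 < b) (hba : b ≤ a) (hc : c ≤ a*b)
    (hu : 0 < u) (hv : 0 < v) (huv : u ≤ v) (hbv : b*v ≤ a*u) :
    a*b*(u^2+v^2)*c - u*v*(a^2*b^2 + c^2) ≤ (a^2+b^2-2*c)*(b^2*v^2) := by
  have h1 : u*v*(a^2*b^2 + c^2) ≥ 2*a*b*u*v*c := by nlinarith [sq_nonneg (a*b - c), mul_pos hu hv]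
  have h2 : a*b*(u^2+v^2)*c - u*v*(a^2*b^2+c^2) ≤ a*b*c*(u-v)^2 := by nlinarith
  refine h2.trans ?_
  have hab2 : (0:ℝ) ≤ a*b*(u-v)^2 := by positivity
  rcases le_or_gt c 0 with hc0 | hc0
  · have h7 : a*b*c*(u-v)^2 ≤ 0 := by nlinarith [mul_nonpos_of_nonneg_of_nonpos hab2 hc0]
    nlinarith [mul_nonneg (mul_nonneg (sq_nonneg b) (sq_nonneg v))
      (by nlinarith [sq_nonneg (a-b)] : (0:ℝ) ≤ a^2+b^2-2*c)]
  · have h3 : a*(v-u) ≤ (a-b)*v := by nlinarith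
    have h4 : a^2*(v-u)^2 ≤ (a-b)^2*v^2 := by nlinarith [mul_nonneg ha.le (sub_nonneg.2 huv)]
    have h5 : a*b*c*(u-v)^2 ≤ a^2*b^2*(v-u)^2 := by
      nlinarith [mul_le_mul_of_nonneg_left hc hab2]
    have h6 : (a-b)^2 ≤ a^2+b^2-2*c := by nlinarith
    have h7 : a^2*b^2*(v-u)^2 ≤ b^2*((a-b)^2*v^2) := by
      nlinarith [mul_le_mul_of_nonneg_left h4 (sq_nonneg b)]
    have h8 : (a-b)^2*(b^2*v^2) ≤ (a^2+b^2-2*c)*(b^2*v^2) := by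
      nlinarith [mul_le_mul_of_nonneg_right h6 (mul_nonneg (sq_nonneg b) (sq_nonneg v))]
    calc a*b*c*(u-v)^2 ≤ a^2*b^2*(v-u)^2 := h5
      _ ≤ b^2*((a-b)^2*v^2) := h7
      _ = (a-b)^2*(b^2*v^2) := by ring
      _ ≤ (a^2+b^2-2*c)*(b^2*v^2) := h8

lemma statement7_key' (γ a b c : ℝ) (hγ1 : -2 < γ) (hγ2 : γ < 0) (ha : 0 < a) (hb : 0 < b)
    (hba : b ≤ a) (hc : c ≤ a*b) :
    2*(a^γ + b^γ)*c - 2*(a^(γ/2-1)*b^(γ/2-1))*(a^2*b^2 + c^2) ≤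
      2*(a^2+b^2-2*c)*b^(1+γ)/a := by
  set u := a ^ (γ/2) with hu_def
  set v := b ^ (γ/2) with hv_def
  have hu : 0 < u := Real.rpow_pos_of_pos ha _
  have hv : 0 < v := Real.rpow_pos_of_pos hb _
  have hu2 : a^γ = u^2 := by rw [hu_def, sq, ← Real.rpow_add ha]; ring_nf
  have hv2 : b^γ = v^2 := by rw [hv_def, sq, ← Real.rpow_add hb]; ring_nf
  have hp : a^(γ/2-1) = u/a := by rw [hu_def, Real.rpow_sub ha, Real.rpow_one]
  have hq : b^(γ/2-1) = v/b := by rw [hv_def, Real.rpow_sub hb, Real.rpow_one]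
  have hbg : b^(1+γ) = b*v^2 := by rw [← hv2, Real.rpow_add hb, Real.rpow_one]
  have huv : u ≤ v := Real.rpow_le_rpow_of_nonpos hb hba (by linarith)
  have hbv : b*v ≤ a*u := by
    have h1 : b^(1+γ/2) = b*v := by rw [hv_def, Real.rpow_add hb, Real.rpow_one]
    have h2 : a^(1+γ/2) = a*u := by rw [hu_def, Real.rpow_add ha, Real.rpow_one]
    rw [← h1, ← h2]
    exact Real.rpow_le_rpow hb.le hba (by linarith)
  have key := statement7_alg a b c u v ha hb hba hc hu hv huv hbv
  have hab : (0:ℝ) < a*b := mul_pos ha hb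
  rw [hu2, hv2, hp, hq, hbg]
  calc 2*(u^2 + v^2)*c - 2*(u/a*(v/b))*(a^2*b^2 + c^2)
      = (a*b)⁻¹*2 * (a*b*(u^2+v^2)*c - u*v*(a^2*b^2 + c^2)) := by field_simp
    _ ≤ (a*b)⁻¹*2 * ((a^2+b^2-2*c)*(b^2*v^2)) :=
        mul_le_mul_of_nonneg_left key (by positivity)
    _ = 2*(a^2+b^2-2*c)*(b*v^2)/a := by field_simp

lemma statement7_key (γ a b c : ℝ) (hγ1 : -2 < γ) (hγ2 : γ < 0) (ha : 0 < a) (hb : 0 < b)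
    (hc : c ≤ a*b) :
    2*(a^γ + b^γ)*c - 2*(a^(γ/2-1)*b^(γ/2-1))*(a^2*b^2 + c^2) ≤
      2*(a^2+b^2-2*c)*(min a b)^(1+γ)/(max a b) := by
  rcases le_total b a with hba | hba
  · rw [min_eq_right hba, max_eq_left hba]
    exact statement7_key' γ a b c hγ1 hγ2 ha hb hba hc
  · rw [min_eq_left hba, max_eq_right hba]
    have := statement7_key' γ b a c hγ1 hγ2 hb ha hba (by linarith [hc])
    calc 2*(a^γ + b^γ)*c - 2*(a^(γ/2-1)*b^(γ/2-1))*(a^2*b^2 + c^2)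
        = 2*(b^γ + a^γ)*c - 2*(b^(γ/2-1)*a^(γ/2-1))*(b^2*a^2 + c^2) := by ring
      _ ≤ 2*(b^2+a^2-2*c)*a^(1+γ)/b := this
      _ = 2*(a^2+b^2-2*c)*a^(1+γ)/b := by ring

lemma statement7_frob_sq (M : Matrix (Fin 3) (Fin 3) ℝ) :
    frob M ^ 2 = ∑ i, ∑ j, M i j ^ 2 := by
  have ht : Matrix.trace (M * Mᵀ) = ∑ i, ∑ j, M i j ^ 2 := by
    simp [Matrix.trace, Matrix.mul_apply, Matrix.diag, sq]
  rw [frob, ht, Real.sq_sqrt (by positivity)]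

lemma statement7_rpow (γ x : ℝ) (hx : 0 < x) :
    (x^(γ/2-1))^2 * (x^2)^2 = x^γ * x^2 := by
  have e1 : (x^(γ/2-1))^2 = x^(γ-2) := by rw [sq, ← Real.rpow_add hx]; ring_nf
  have e2 : ((x^(2:ℕ)):ℝ)^(2:ℕ) = x^((4:ℝ)) := by
    rw [← pow_mul, show x^((4:ℝ)) = x^((4:ℕ):ℝ) by norm_num, Real.rpow_natCast]
  have e3 : (x:ℝ)^(2:ℕ) = x^((2:ℝ)) := by
    rw [show x^((2:ℝ)) = x^((2:ℕ):ℝ) by norm_num, Real.rpow_natCast]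
  rw [e1, e2, ← Real.rpow_add hx, e3, ← Real.rpow_add hx]
  congr 1
  ring

/-- for `γ ∈ (-2,0)` and all nonzero `X, Y ∈ ℝ³`,
`(X − Y)·(b(X) − b(Y)) + ‖σ(X) − σ(Y)‖² ≤ 2 |X − Y|² (min(|X|,|Y|))^{1+γ} / max(|X|,|Y|)`. -/
theorem statement7 (γ : ℝ) (hγ : γ ∈ Set.Ioo (-2 : ℝ) 0)
    (X Y : EuclideanSpace ℝ (Fin 3)) (hX : X ≠ 0) (hY : Y ≠ 0) :
    (inner ℝ (X - Y) (bKer γ X - bKer γ Y) : ℝ) + frob (sigmaMat γ X - sigmaMat γ Y) ^ 2 ≤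
      2 * ‖X - Y‖ ^ 2 * (min ‖X‖ ‖Y‖) ^ (1 + γ) / max ‖X‖ ‖Y‖ := by
  obtain ⟨hγ1, hγ2⟩ := hγ
  set a := ‖X‖ with ha_def
  set b := ‖Y‖ with hb_def
  have ha : 0 < a := norm_pos_iff.2 hX
  have hb : 0 < b := norm_pos_iff.2 hY
  set c : ℝ := inner ℝ X Y with hc_def
  have hA : X 0 * X 0 + X 1 * X 1 + X 2 * X 2 = a ^ 2 := by
    rw [ha_def, ← real_inner_self_eq_norm_sq]
    simp only [PiLp.inner_apply, RCLike.inner_apply, Fin.sum_univ_three, conj_trivial]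
  have hB : Y 0 * Y 0 + Y 1 * Y 1 + Y 2 * Y 2 = b ^ 2 := by
    rw [hb_def, ← real_inner_self_eq_norm_sq]
    simp only [PiLp.inner_apply, RCLike.inner_apply, Fin.sum_univ_three, conj_trivial]
  have hC : X 0 * Y 0 + X 1 * Y 1 + X 2 * Y 2 = c := by
    rw [hc_def]
    simp [PiLp.inner_apply, RCLike.inner_apply, Fin.sum_univ_three]
    ring
  set g1 := a ^ γ with hg1
  set g2 := b ^ γ with hg2
  set p := a ^ (γ/2 - 1) with hp
  set q := b ^ (γ/2 - 1) with hq
  have E1 : (inner ℝ (X - Y) (bKer γ X - bKer γ Y) : ℝ)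
      = -2*g1*a^2 - 2*g2*b^2 + 2*(g1+g2)*c := by
    rw [← hA, ← hB, ← hC]
    simp only [PiLp.inner_apply, RCLike.inner_apply, bKer, PiLp.sub_apply, PiLp.smul_apply,
      smul_eq_mul, Fin.sum_univ_three, conj_trivial]
    ring
  have E2 : frob (sigmaMat γ X - sigmaMat γ Y) ^ 2
      = 2*p^2*(a^2)^2 + 2*q^2*(b^2)^2 - 2*p*q*(a^2*b^2 + c^2) := by
    rw [statement7_frob_sq]
    simp only [sigmaMat, Matrix.sub_apply, Matrix.smul_apply, Matrix.one_apply,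
      Matrix.of_apply, smul_eq_mul, Fin.sum_univ_three, Fin.reduceEq, reduceIte,
      mul_one, mul_zero, sub_zero, zero_sub, if_true, if_false]
    rw [← hA, ← hB, ← hC]
    ring
  have hpa : p^2*(a^2)^2 = g1*a^2 := statement7_rpow γ a ha
  have hqb : q^2*(b^2)^2 = g2*b^2 := statement7_rpow γ b hb
  have hcab : c ≤ a*b := real_inner_le_norm X Y
  have hnorm : ‖X - Y‖^2 = a^2 + b^2 - 2*c := by
    rw [norm_sub_sq_real]; ring
  rw [E1, E2, hnorm]
  have hK := statement7_key γ a b c hγ1 hγ2 ha hb hcab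
  calc -2*g1*a^2 - 2*g2*b^2 + 2*(g1+g2)*c
        + (2*p^2*(a^2)^2 + 2*q^2*(b^2)^2 - 2*p*q*(a^2*b^2 + c^2))
      = 2*(g1 + g2)*c - 2*(p*q)*(a^2*b^2 + c^2) := by linear_combination 2*hpa + 2*hqb
    _ ≤ 2*(a^2+b^2-2*c)*(min a b)^(1+γ)/(max a b) := hK
    _ = 2 * (a^2+b^2-2*c) * (min a b)^(1+γ) / max a b := by ring
end
end

section
/- Let γ ∈ (-2, 0). For v, v_*, w, w_* ∈ ℝ³ with v ≠ v_* and w ≠ w_*, write Δ(v,v_*,w,w_*) := 2(v−w)·(b(v−v_*) − b(w−w_*)) + ‖σ(v−v_*) − σ(w−w_*)‖² with b(X) = -2|X|^γ X, σ(X) = |X|^{γ/2−1}(|X|²I − X⊗X). Then Δ = Δ₁ + Δ₂, where Δ₁(v,v_*,w,w_*) := ((v−w)+(v_*−w_*))·(b(v−v_*) − b(w−w_*)) satisfies the antisymmetry Δ₁(v,v_*,w,w_*) = −Δ₁(v_*,v,w_*,w), and Δ₂ satisfies Δ₂ ≤ 4(|v−w|² + |v_*−w_*|²) K(|v−v_*|,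 |w−w_*|) where K(x,y) := (min(x,y))^{1+γ} / max(x,y). -/
open Matrix

noncomputable section

/-- `Δ(v,v_*,w,w_*) = 2(v−w)·(b(v−v_*) − b(w−w_*)) + ‖σ(v−v_*) − σ(w−w_*)‖²`. -/
def Delta (γ : ℝ) (v vs w ws : EuclideanSpace ℝ (Fin 3)) : ℝ :=
  2 * (inner ℝ (v - w) (bKer γ (v - vs) - bKer γ (w - ws)) : ℝ) +
    frob (sigmaMat γ (v - vs) - sigmaMat γ (w - ws)) ^ 2

/-- `Δ₁(v,v_*,w,w_*) = ((v−w)+(v_*−w_*))·(b(v−v_*) − b(w−w_*))`. -/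
def Delta1 (γ : ℝ) (v vs w ws : EuclideanSpace ℝ (Fin 3)) : ℝ :=
  (inner ℝ ((v - w) + (vs - ws)) (bKer γ (v - vs) - bKer γ (w - ws)) : ℝ)

/-- The kernel `K(x,y) = (min(x,y))^{1+γ} / max(x,y)`. -/
def Kker (γ x y : ℝ) : ℝ := (min x y) ^ (1 + γ) / max x y

/-! ### Auxiliary lemmas -/

set_option maxHeartbeats 1000000 in
lemma key_le (γ x y s : ℝ) (hx : 0 < x) (hxy : x ≤ y) (hs : s ≤ x*y)
    (hγ1 : (-2:ℝ) < γ) (hγ2 : γ < 0) :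
    2*(x^γ + y^γ)*s - 2*(x^(γ/2-1)*y^(γ/2-1))*(x^2*y^2 + s^2) ≤
      2*(x^2 + y^2 - 2*s) * (x^(1+γ)/y) := by
  have hy : 0 < y := lt_of_lt_of_le hx hxy
  set p := x^(γ/2) with hp
  set q := y^(γ/2) with hq
  have hp0 : 0 < p := Real.rpow_pos_of_pos hx _
  have hq0 : 0 < q := Real.rpow_pos_of_pos hy _
  have hxg : x^γ = p^2 := by
    rw [hp, ← Real.rpow_natCast (x^(γ/2)) 2, ← Real.rpow_mul hx.le]; norm_num
  have hyg : y^γ = q^2 := by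
    rw [hq, ← Real.rpow_natCast (y^(γ/2)) 2, ← Real.rpow_mul hy.le]; norm_num
  have hxh : x^(γ/2-1) = p/x := by
    rw [hp, Real.rpow_sub hx, Real.rpow_one]
  have hyh : y^(γ/2-1) = q/y := by
    rw [hq, Real.rpow_sub hy, Real.rpow_one]
  have hx1g : x^(1+γ) = x*p^2 := by
    rw [Real.rpow_add hx, Real.rpow_one, hxg]
  have hqp : q ≤ p := Real.rpow_le_rpow_of_nonpos hx hxy (by linarith)
  have hpxqy : p*x ≤ q*y := by
    have h1 : x^(γ/2+1) ≤ y^(γ/2+1) := Real.rpow_le_rpow hx.le hxy (by linarith)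
    simp only [Real.rpow_add hx, Real.rpow_add hy, Real.rpow_one] at h1
    linarith
  rw [hxg, hyg, hxh, hyh, hx1g, ← sub_nonneg]
  have keyeq : 2*(x^2 + y^2 - 2*s) * (x*p^2/y) - (2*(p^2 + q^2)*s - 2*(p/x*(q/y))*(x^2*y^2 + s^2))
      = (2*(x^2+y^2-2*s)*(x^2*p^2) - 2*(p^2+q^2)*s*(x*y) + 2*p*q*(x^2*y^2+s^2)) / (x*y) := by
    field_simp
    ring
  rw [keyeq]
  apply div_nonneg _ (by positivity)
  have h1 : 0 ≤ 2*p*q*(s - x*y)^2 := by positivity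
  have e1 : 4*p*q*s*(x*y) ≤ 2*p*q*(x^2*y^2+s^2) := by nlinarith [h1]
  have e2 : 2*s*(x*y)*(p-q)^2 ≤ 2*(x*y)^2*(p-q)^2 := by
    nlinarith [mul_nonneg (mul_nonneg (mul_nonneg (by norm_num : (0:ℝ) ≤ 2) (mul_pos hx hy).le) (sub_nonneg.2 hs)) (sq_nonneg (p-q))]
  have h3 : y*(p-q) ≤ p*(y-x) := by nlinarith
  have h4 : 0 ≤ p - q := by linarith
  have h5 : (y*(p-q))^2 ≤ (p*(y-x))^2 :=
    pow_le_pow_left₀ (mul_nonneg hy.le h4) h3 2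
  have e3 : 2*(x*y)^2*(p-q)^2 ≤ 2*x^2*(p*(y-x))^2 := by
    nlinarith [mul_le_mul_of_nonneg_left h5 (show (0:ℝ) ≤ 2*x^2 by positivity)]
  have e4 : 2*x^2*(p*(y-x))^2 ≤ 2*(x^2*p^2)*(x^2+y^2-2*s) := by
    have h6 : (y-x)^2 ≤ x^2+y^2-2*s := by nlinarith
    nlinarith [mul_le_mul_of_nonneg_left h6 (show (0:ℝ) ≤ 2*x^2*p^2 by positivity)]
  nlinarith [e1, e2, e3, e4]

lemma keylem (γ x y s : ℝ) (hx : 0 < x) (hy : 0 < y) (hs : s ≤ x*y)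
    (hγ1 : (-2:ℝ) < γ) (hγ2 : γ < 0) :
    2*(x^γ + y^γ)*s - 2*(x^(γ/2-1)*y^(γ/2-1))*(x^2*y^2 + s^2) ≤
      2*(x^2 + y^2 - 2*s) * Kker γ x y := by
  rcases le_total x y with h | h
  · have := key_le γ x y s hx h hs hγ1 hγ2
    rwa [Kker, min_eq_left h, max_eq_right h]
  · have h' := key_le γ y x s hy h (mul_comm x y ▸ hs) hγ1 hγ2
    rw [Kker, min_eq_right h, max_eq_left h]
    calc 2*(x^γ + y^γ)*s - 2*(x^(γ/2-1)*y^(γ/2-1))*(x^2*y^2 + s^2)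
        = 2*(y^γ + x^γ)*s - 2*(y^(γ/2-1)*x^(γ/2-1))*(y^2*x^2 + s^2) := by ring
      _ ≤ 2*(y^2 + x^2 - 2*s) * (y^(1+γ)/x) := h'
      _ = 2*(x^2 + y^2 - 2*s) * (y^(1+γ)/x) := by ring

lemma trace_mul_transpose_nonneg (M : Matrix (Fin 3) (Fin 3) ℝ) :
    0 ≤ Matrix.trace (M * Mᵀ) := by
  simp only [Matrix.trace, Matrix.diag, Matrix.mul_apply, Matrix.transpose_apply]
  refine Finset.sum_nonneg fun i _ => Finset.sum_nonneg fun j _ => mul_self_nonneg _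

lemma frob_sq_eq (M : Matrix (Fin 3) (Fin 3) ℝ) :
    frob M ^ 2 = Matrix.trace (M * Mᵀ) :=
  Real.sq_sqrt (trace_mul_transpose_nonneg M)

lemma norm_sq_coords (X : EuclideanSpace ℝ (Fin 3)) :
    ‖X‖ ^ 2 = X 0 ^ 2 + X 1 ^ 2 + X 2 ^ 2 := by
  rw [← real_inner_self_eq_norm_sq]
  simp only [PiLp.inner_apply, Fin.sum_univ_three, RCLike.inner_apply, conj_trivial]
  ring

lemma inner_coords (X Y : EuclideanSpace ℝ (Fin 3)) :
    (inner ℝ X Y : ℝ) = X 0 * Y 0 + X 1 * Y 1 + X 2 * Y 2 := by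
  simp [PiLp.inner_apply, Fin.sum_univ_three]
  ring

lemma frob_sq_formula (γ : ℝ) (X Y : EuclideanSpace ℝ (Fin 3)) :
    frob (sigmaMat γ X - sigmaMat γ Y) ^ 2 =
      2*(‖X‖^(γ/2-1))^2*(‖X‖^2)^2 + 2*(‖Y‖^(γ/2-1))^2*(‖Y‖^2)^2
        - 2*(‖X‖^(γ/2-1)*‖Y‖^(γ/2-1))*(‖X‖^2*‖Y‖^2 + (inner ℝ X Y : ℝ)^2) := by
  rw [frob_sq_eq]
  rw [norm_sq_coords X, norm_sq_coords Y, inner_coords]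
  simp only [sigmaMat, Matrix.trace, Matrix.diag, Matrix.mul_apply, Matrix.transpose_apply,
    Matrix.sub_apply, Matrix.smul_apply, Matrix.one_apply, Matrix.of_apply,
    Fin.sum_univ_three, norm_sq_coords, smul_eq_mul]
  norm_num [if_neg (show (0:Fin 3) ≠ 1 by decide), if_neg (show (0:Fin 3) ≠ 2 by decide),
    if_neg (show (1:Fin 3) ≠ 0 by decide), if_neg (show (1:Fin 3) ≠ 2 by decide),
    if_neg (show (2:Fin 3) ≠ 0 by decide), if_neg (show (2:Fin 3) ≠ 1 by decide)]
  ring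

lemma bKer_neg (γ : ℝ) (X : EuclideanSpace ℝ (Fin 3)) : bKer γ (-X) = - bKer γ X := by
  simp [bKer]

lemma rpow_half_sq {x : ℝ} (hx : 0 < x) (γ : ℝ) :
    (x^(γ/2-1))^2 = x^γ / x^2 := by
  rw [← Real.rpow_natCast (x^(γ/2-1)) 2, ← Real.rpow_mul hx.le,
    show (γ/2-1)*((2:ℕ):ℝ) = γ - 2 by push_cast; ring, Real.rpow_sub hx,
    show (2:ℝ) = ((2:ℕ):ℝ) by norm_num, Real.rpow_natCast]

/-- for `γ ∈ (-2,0)`, writing `Δ = Δ₁ + Δ₂`, the part `Δ₁` is antisymmetric,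
i.e. `Δ₁(v,v_*,w,w_*) = −Δ₁(v_*,v,w_*,w)`, and `Δ₂ = Δ − Δ₁` satisfies
`Δ₂ ≤ 4 (|v−w|² + |v_*−w_*|²) K(|v−v_*|, |w−w_*|)`. -/
theorem statement8 (γ : ℝ) (hγ : γ ∈ Set.Ioo (-2 : ℝ) 0)
    (v vs w ws : EuclideanSpace ℝ (Fin 3)) (hv : v ≠ vs) (hw : w ≠ ws) :
    Delta1 γ v vs w ws = - Delta1 γ vs v ws w ∧
    Delta γ v vs w ws - Delta1 γ v vs w ws ≤
      4 * (‖v - w‖ ^ 2 + ‖vs - ws‖ ^ 2) * Kker γ ‖v - vs‖ ‖w - ws‖ := by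
  obtain ⟨hγ1, hγ2⟩ := hγ
  constructor
  · unfold Delta1
    rw [show vs - v = -(v - vs) from (neg_sub v vs).symm,
      show ws - w = -(w - ws) from (neg_sub w ws).symm, bKer_neg, bKer_neg,
      show -bKer γ (v - vs) - -bKer γ (w - ws) = -(bKer γ (v - vs) - bKer γ (w - ws)) by abel,
      inner_neg_right, show (vs - ws) + (v - w) = (v - w) + (vs - ws) from add_comm _ _]
    ring
  · set X := v - vs with hXdef
    set Y := w - ws with hYdef
    have hX0 : X ≠ 0 := sub_ne_zero.2 hv
    have hY0 : Y ≠ 0 := sub_ne_zero.2 hw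
    have hx : 0 < ‖X‖ := norm_pos_iff.2 hX0
    have hy : 0 < ‖Y‖ := norm_pos_iff.2 hY0
    set s : ℝ := inner ℝ X Y with hsdef
    have hsC : s ≤ ‖X‖ * ‖Y‖ := real_inner_le_norm X Y
    -- Δ - Δ₁ in scalar form
    have hD : Delta γ v vs w ws - Delta1 γ v vs w ws
        = (inner ℝ (X - Y) (bKer γ X - bKer γ Y) : ℝ)
          + frob (sigmaMat γ X - sigmaMat γ Y) ^ 2 := by
      rw [Delta, Delta1]
      have hvw : (v - w) - (vs - ws) = X - Y := by rw [hXdef, hYdef]; abel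
      rw [← hvw]
      simp only [inner_add_left, inner_sub_left]
      ring
    have hinner : (inner ℝ (X - Y) (bKer γ X - bKer γ Y) : ℝ)
        = -2*‖X‖^γ*‖X‖^2 - 2*‖Y‖^γ*‖Y‖^2 + 2*(‖X‖^γ + ‖Y‖^γ)*s := by
      simp only [bKer, inner_sub_left, inner_sub_right, real_inner_smul_right,
        real_inner_self_eq_norm_sq]
      have hc : (inner ℝ Y X : ℝ) = s := by rw [hsdef]; exact (real_inner_comm Y X).symm
      simp only [hc, ← hsdef]
      ring
    have hA : (‖X‖^(γ/2-1))^2 = ‖X‖^γ / ‖X‖^2 := rpow_half_sq hx γ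
    have hB : (‖Y‖^(γ/2-1))^2 = ‖Y‖^γ / ‖Y‖^2 := rpow_half_sq hy γ
    have hscal : Delta γ v vs w ws - Delta1 γ v vs w ws
        = 2*(‖X‖^γ + ‖Y‖^γ)*s - 2*(‖X‖^(γ/2-1)*‖Y‖^(γ/2-1))*(‖X‖^2*‖Y‖^2 + s^2) := by
      rw [hD, hinner, frob_sq_formula, hA, hB, ← hsdef]
      have hx2 : (‖X‖:ℝ)^2 ≠ 0 := by positivity
      have hy2 : (‖Y‖:ℝ)^2 ≠ 0 := by positivity
      field_simp
      ring
    have hkey := keylem γ ‖X‖ ‖Y‖ s hx hy hsC hγ1 hγ2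
    have hK0 : 0 ≤ Kker γ ‖X‖ ‖Y‖ := by
      rw [Kker]
      apply div_nonneg (Real.rpow_nonneg (le_min hx.le hy.le) _) (le_max_of_le_left hx.le)
    have hXY : ‖X - Y‖ ≤ ‖v - w‖ + ‖vs - ws‖ := by
      rw [show X - Y = (v - w) - (vs - ws) by rw [hXdef, hYdef]; abel]
      exact norm_sub_le _ _
    have hnormsq : ‖X - Y‖^2 = ‖X‖^2 - 2*s + ‖Y‖^2 := by
      rw [norm_sub_sq_real, hsdef]
    have hbound : ‖X‖^2 + ‖Y‖^2 - 2*s ≤ 2*(‖v - w‖^2 + ‖vs - ws‖^2) := by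
      nlinarith [hXY, norm_nonneg (X - Y), norm_nonneg (v - w), norm_nonneg (vs - ws),
        sq_nonneg (‖v - w‖ - ‖vs - ws‖), hnormsq]
    calc Delta γ v vs w ws - Delta1 γ v vs w ws
        = 2*(‖X‖^γ + ‖Y‖^γ)*s - 2*(‖X‖^(γ/2-1)*‖Y‖^(γ/2-1))*(‖X‖^2*‖Y‖^2 + s^2) := hscal
      _ ≤ 2*(‖X‖^2 + ‖Y‖^2 - 2*s) * Kker γ ‖X‖ ‖Y‖ := hkey
      _ ≤ 2*(2*(‖v - w‖^2 + ‖vs - ws‖^2)) * Kker γ ‖X‖ ‖Y‖ := by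
          apply mul_le_mul_of_nonneg_right _ hK0
          linarith
      _ = 4 * (‖v - w‖^2 + ‖vs - ws‖^2) * Kker γ ‖X‖ ‖Y‖ := by ring
end
end
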